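/- For μ ≠ 0 and real x > 0, the derivative of the function φ(x) = |exp_μ(-ix)|² equals (-μ)·2^{2μ+1}·Γ(μ+1/2)²·x^{-2μ}·(J_{μ+1/2}(x))², where J_ν denotes the Bessel function of the first kind of order ν. In particular, φ is strictly decreasing on (0,∞) when μ > 0 and strictly increasing on (0,∞) when -1/2 < μ < 0. -/

import Mathlib

open Finset

/-- The μ-deformed factorial function γ_μ. -/
noncomputable def gammaMu (μ : ℝ) : ℕ → ℝ
  | 0 => 1
  | n + 1 => ((n + 1 : ℝ) + 2 * μ * (if Odd (n + 1) then 1 else 0)) * gammaMu μ n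

/-- The μ-deformed binomial coefficient C_μ(n,k), zero outside 0 ≤ k ≤ n. -/
noncomputable def binomMu (μ : ℝ) (n : ℕ) (k : ℤ) : ℝ :=
  if 0 ≤ k ∧ k ≤ (n : ℤ) then gammaMu μ n / (gammaMu μ (n - k.toNat) * gammaMu μ k.toNat) else 0

/-- The n-th μ-deformed binomial polynomial p_{n,μ}(x,y). -/
noncomputable def pMu (μ : ℝ) (n : ℕ) (x y : ℂ) : ℂ :=
  ∑ k ∈ Finset.range (n + 1), (binomMu μ n k : ℂ) * x ^ k * y ^ (n - k)

/-- The μ-deformed exponential function. -/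
noncomputable def expMu (μ : ℝ) (z : ℂ) : ℂ :=
  ∑' n : ℕ, z ^ n / (gammaMu μ n : ℂ)

/-- The Bessel function of the first kind of order ν, for positive real argument. -/
noncomputable def besselJ (ν x : ℝ) : ℝ :=
  ∑' m : ℕ, ((-1) ^ m / (Nat.factorial m * Real.Gamma (ν + m + 1))) * (x / 2) ^ ((2 * m : ℝ) + ν)


lemma gammaMu_succ (μ : ℝ) (n : ℕ) :
    gammaMu μ (n + 1) = ((n + 1 : ℝ) + 2 * μ * (if Odd (n + 1) then 1 else 0)) * gammaMu μ n :=
  rfl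

lemma gammaMu_odd_succ (μ : ℝ) (m : ℕ) :
    gammaMu μ (2 * m + 1) = ((2 * m + 1 : ℝ) + 2 * μ) * gammaMu μ (2 * m) := by
  rw [gammaMu_succ, if_pos (by exact ⟨m, by ring⟩)]
  push_cast; ring_nf

lemma gammaMu_even_succ (μ : ℝ) (m : ℕ) :
    gammaMu μ (2 * m + 2) = (2 * m + 2 : ℝ) * gammaMu μ (2 * m + 1) := by
  rw [show 2 * m + 2 = (2 * m + 1) + 1 from rfl, gammaMu_succ, if_neg (by simp [Nat.even_add_one, parity_simps])]
  push_cast; ring_nf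

lemma gammaMu_pos {μ : ℝ} (hμ : -(1/2 : ℝ) < μ) : ∀ n, 0 < gammaMu μ n := by
  intro n
  induction n with
  | zero => norm_num [gammaMu]
  | succ n ih =>
      rw [gammaMu_succ]
      refine mul_pos ?_ ih
      by_cases h : Odd (n + 1)
      · rw [if_pos h]
        have : (0:ℝ) ≤ n := Nat.cast_nonneg n
        nlinarith
      · rw [if_neg h]
        simp only [mul_zero, add_zero]
        positivity

lemma gammaMu_ge {μ : ℝ} (hμ : -(1/2 : ℝ) < μ) :
    ∀ n, min (1 + 2*μ) 1 * (n.factorial : ℝ) ≤ gammaMu μ (n + 1) := by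
  intro n
  induction n with
  | zero =>
      simp only [Nat.factorial_zero, Nat.cast_one, mul_one]
      have : gammaMu μ 1 = 1 + 2*μ := by
        show gammaMu μ (0 + 1) = _; rw [gammaMu_succ]
        simp [gammaMu]
      rw [this]
      exact min_le_left _ _
  | succ n ih =>
      have h1 : ((n+1:ℕ) : ℝ) * gammaMu μ (n+1) ≤ gammaMu μ (n + 2) := by
        rw [show n + 2 = (n+1) + 1 from rfl, gammaMu_succ]
        have hg := gammaMu_pos hμ (n+1)
        have hfac : ((n:ℝ) + 1) ≤ ((n + 1 + 1 : ℝ) + 2 * μ * (if Odd (n + 1 + 1) then 1 else 0)) := by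
          by_cases h : Odd (n + 1 + 1) <;> simp [h] <;> nlinarith
        calc ((n+1:ℕ):ℝ) * gammaMu μ (n+1) = ((n:ℝ)+1) * gammaMu μ (n+1) := by push_cast; ring
        _ ≤ _ := by
            apply mul_le_mul_of_nonneg_right _ hg.le
            refine le_of_le_of_eq hfac ?_
            push_cast; ring
      calc min (1 + 2*μ) 1 * ((n+1).factorial : ℝ)
          = ((n+1:ℕ):ℝ) * (min (1 + 2*μ) 1 * (n.factorial : ℝ)) := by
            rw [Nat.factorial_succ]; push_cast; ring
        _ ≤ ((n+1:ℕ):ℝ) * gammaMu μ (n+1) := by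
            apply mul_le_mul_of_nonneg_left ih; positivity
        _ ≤ _ := h1

lemma summable_pow_div_gammaMu {μ : ℝ} (hμ : -(1/2 : ℝ) < μ) (r : ℝ) (hr : 0 ≤ r) :
    Summable (fun n => r ^ n / gammaMu μ n) := by
  have hδ : 0 < min (1 + 2*μ) 1 := by
    apply lt_min _ one_pos; linarith
  rw [← summable_nat_add_iff 1]
  apply Summable.of_nonneg_of_le
  · intro n
    exact div_nonneg (by positivity) (gammaMu_pos hμ _).le
  · intro n
    show r ^ (n+1) / gammaMu μ (n+1) ≤ (r / min (1 + 2*μ) 1) * (r ^ n / n.factorial)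
    have h1 := gammaMu_ge hμ n
    have h2 := gammaMu_pos hμ (n+1)
    have hfac : (0:ℝ) < n.factorial := by positivity
    rw [div_mul_div_comm, div_le_div_iff₀ h2 (by positivity)]
    calc r ^ (n+1) * (min (1+2*μ) 1 * ↑n.factorial) ≤ r ^ (n+1) * gammaMu μ (n+1) := by
          apply mul_le_mul_of_nonneg_left h1 (by positivity)
      _ = r * r ^ n * gammaMu μ (n+1) := by ring
    
  · exact ((Real.summable_pow_div_factorial r).mul_left _)

open FormalMultilinearSeries

/-- coefficients of the "cosine" part -/
noncomputable def cA (μ : ℝ) (n : ℕ) : ℝ := if Even n then (-1)^(n/2) / gammaMu μ n else 0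
/-- coefficients of the "sine" part -/
noncomputable def cB (μ : ℝ) (n : ℕ) : ℝ := if Odd n then (-1)^(n/2) / gammaMu μ n else 0

noncomputable def pA (μ : ℝ) : FormalMultilinearSeries ℝ ℝ ℝ := ofScalars ℝ (cA μ)
noncomputable def pB (μ : ℝ) : FormalMultilinearSeries ℝ ℝ ℝ := ofScalars ℝ (cB μ)

noncomputable def fC (μ : ℝ) : ℝ → ℝ := (pA μ).sum
noncomputable def fS (μ : ℝ) : ℝ → ℝ := (pB μ).sum

lemma abs_cA_le {μ : ℝ} (hμ : -(1/2 : ℝ) < μ) (n : ℕ) : |cA μ n| ≤ 1 / gammaMu μ n := by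
  have := gammaMu_pos hμ n
  unfold cA
  split
  · rw [abs_div, abs_pow, abs_neg, abs_one, one_pow, abs_of_pos this]
  · simp; positivity

lemma abs_cB_le {μ : ℝ} (hμ : -(1/2 : ℝ) < μ) (n : ℕ) : |cB μ n| ≤ 1 / gammaMu μ n := by
  have := gammaMu_pos hμ n
  unfold cB
  split
  · rw [abs_div, abs_pow, abs_neg, abs_one, one_pow, abs_of_pos this]
  · simp; positivity

lemma summable_coeff_mul_pow {μ : ℝ} (hμ : -(1/2 : ℝ) < μ) (c : ℕ → ℝ)
    (hc : ∀ n, |c n| ≤ 1 / gammaMu μ n) (x : ℝ) : Summable (fun n => ‖c n * x ^ n‖) := by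
  refine Summable.of_nonneg_of_le (fun n => norm_nonneg _) (fun n => ?_)
    (summable_pow_div_gammaMu hμ |x| (abs_nonneg x))
  · rw [norm_mul, norm_pow, Real.norm_eq_abs, Real.norm_eq_abs]
    have h := gammaMu_pos hμ n
    calc |c n| * |x| ^ n ≤ (1 / gammaMu μ n) * |x| ^ n := by
          apply mul_le_mul_of_nonneg_right (hc n) (by positivity)
      _ = |x| ^ n / gammaMu μ n := by ring

lemma radius_ofScalars_top {μ : ℝ} (hμ : -(1/2 : ℝ) < μ) (c : ℕ → ℝ)
    (hc : ∀ n, |c n| ≤ 1 / gammaMu μ n) : (ofScalars ℝ c).radius = ⊤ := by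
  apply FormalMultilinearSeries.radius_eq_top_of_summable_norm
  intro r
  simp only [ofScalars_norm]
  have := summable_coeff_mul_pow hμ c hc (r : ℝ)
  apply this.congr
  intro n
  rw [norm_mul, norm_pow, Real.norm_eq_abs, Real.norm_eq_abs,
    abs_of_nonneg (r.coe_nonneg)]

lemma hasFPowerSeries_pA {μ : ℝ} (hμ : -(1/2 : ℝ) < μ) :
    HasFPowerSeriesOnBall (fC μ) (pA μ) 0 ⊤ := by
  have h := radius_ofScalars_top hμ (cA μ) (abs_cA_le hμ)
  have := FormalMultilinearSeries.hasFPowerSeriesOnBall (pA μ) (by rw [pA, h]; exact ENNReal.zero_lt_top)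
  rwa [show (pA μ).radius = ⊤ from h] at this

lemma hasFPowerSeries_pB {μ : ℝ} (hμ : -(1/2 : ℝ) < μ) :
    HasFPowerSeriesOnBall (fS μ) (pB μ) 0 ⊤ := by
  have h := radius_ofScalars_top hμ (cB μ) (abs_cB_le hμ)
  have := FormalMultilinearSeries.hasFPowerSeriesOnBall (pB μ) (by rw [pB, h]; exact ENNReal.zero_lt_top)
  rwa [show (pB μ).radius = ⊤ from h] at this

lemma hasSum_fC {μ : ℝ} (hμ : -(1/2 : ℝ) < μ) (x : ℝ) :
    HasSum (fun n => cA μ n * x ^ n) (fC μ x) := by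
  have := (hasFPowerSeries_pA hμ).hasSum (y := x) (by simp)
  simp only [zero_add] at this
  apply this.congr_fun
  intro n
  rw [pA, ofScalars_apply_eq, smul_eq_mul]

lemma hasSum_fS {μ : ℝ} (hμ : -(1/2 : ℝ) < μ) (x : ℝ) :
    HasSum (fun n => cB μ n * x ^ n) (fS μ x) := by
  have := (hasFPowerSeries_pB hμ).hasSum (y := x) (by simp)
  simp only [zero_add] at this
  apply this.congr_fun
  intro n
  rw [pB, ofScalars_apply_eq, smul_eq_mul]

lemma hasSum_deriv_aux {f : ℝ → ℝ} {p : FormalMultilinearSeries ℝ ℝ ℝ}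
    (h : HasFPowerSeriesOnBall f p 0 ⊤) (x : ℝ) :
    HasSum (fun n : ℕ => ((n:ℝ) + 1) * (p (n+1) fun _ => x)) (x * deriv f x) := by
  have hd := h.fderiv
  have hs := hd.hasSum (y := x) (by simp)
  rw [zero_add] at hs
  have hs2 := (ContinuousLinearMap.apply ℝ ℝ x).hasSum hs
  simp only [ContinuousLinearMap.apply_apply] at hs2
  have hx : (fderiv ℝ f x) x = x * deriv f x := by
    conv_lhs => rw [show (x:ℝ) = x • (1:ℝ) by simp]
    rw [map_smul, fderiv_apply_one_eq_deriv]
    simp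
  rw [hx] at hs2
  apply hs2.congr_fun
  intro n
  rw [p.derivSeries_apply_diag, nsmul_eq_mul]
  push_cast
  ring

lemma step_cA (μ : ℝ) (n : ℕ) : ((n:ℝ) + 1) * cA μ (n+1) = -(cB μ n) := by
  rcases Nat.even_or_odd n with he | ho
  · have h1 : ¬ Even (n+1) := by simp [Nat.even_add_one, he]
    have h2 : ¬ Odd n := by simp [Nat.not_odd_iff_even.mpr he]
    simp [cA, cB, h1, h2]
  · obtain ⟨m, rfl⟩ := ho
    have h1 : Even (2*m+1+1) := by exact ⟨m+1, by ring⟩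
    have h2 : Odd (2*m+1) := ⟨m, by ring⟩
    have h3 : (2*m+1+1)/2 = m + 1 := by omega
    have h4 : (2*m+1)/2 = m := by omega
    simp only [cA, cB, if_pos h1, if_pos h2, h3, h4]
    have hg : gammaMu μ (2*m+1+1) = (2 * m + 2 : ℝ) * gammaMu μ (2*m+1) := gammaMu_even_succ μ m
    rw [hg]
    rcases eq_or_ne (gammaMu μ (2*m+1)) 0 with h | h
    · simp [h]
    · field_simp
      push_cast
      ring

lemma step_cB {μ : ℝ} (hμ : -(1/2 : ℝ) < μ) (n : ℕ) :
    ((n:ℝ) + 1) * cB μ (n+1) = cA μ n - 2*μ*cB μ (n+1) := by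
  rcases Nat.even_or_odd n with he | ho
  · obtain ⟨m, rfl⟩ := he
    have h1 : Odd (m + m + 1) := ⟨m, by ring⟩
    have h2 : Even (m + m) := ⟨m, rfl⟩
    have h3 : (m + m + 1)/2 = m := by omega
    have h4 : (m + m)/2 = m := by omega
    simp only [cA, cB, if_pos h1, if_pos h2, h3, h4]
    have hg : gammaMu μ (m + m + 1) = ((2*m + 1 : ℝ) + 2*μ) * gammaMu μ (m + m) := by
      have := gammaMu_odd_succ μ m
      rw [show 2*m = m + m by ring] at this
      convert this using 3 <;> push_cast <;> ring
    rw [hg]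
    have hA := gammaMu_pos hμ (m + m)
    have hB : ((2*m + 1 : ℝ) + 2*μ) ≠ 0 := by
      have : (0:ℝ) ≤ m := Nat.cast_nonneg m
      nlinarith [gammaMu_pos hμ (m+m)]
    field_simp
    push_cast
    ring
  · obtain ⟨m, rfl⟩ := ho
    have h1 : ¬ Odd (2*m+1+1) := by simp [Nat.even_add_one, parity_simps]
    have h2 : ¬ Even (2*m+1) := by simp [Nat.even_add_one, parity_simps]
    simp [cA, cB, h1, h2]

lemma hasDerivAt_fC {μ : ℝ} (hμ : -(1/2 : ℝ) < μ) {x : ℝ} (hx : x ≠ 0) :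
    HasDerivAt (fC μ) (-(fS μ x)) x := by
  have hdiff : DifferentiableAt ℝ (fC μ) x :=
    ((hasFPowerSeries_pA hμ).analyticAt_of_mem (by simp)).differentiableAt
  have h1 := hasSum_deriv_aux (hasFPowerSeries_pA hμ) x
  have h2 : HasSum (fun n : ℕ => ((n:ℝ) + 1) * (pA μ (n+1) fun _ => x)) (-(fS μ x * x)) := by
    have h3 := ((hasSum_fS hμ x).mul_right x).neg
    apply h3.congr_fun
    intro n
    rw [pA, ofScalars_apply_eq, smul_eq_mul]
    rw [show ((n:ℝ)+1) * (cA μ (n+1) * x^(n+1)) = (((n:ℝ)+1) * cA μ (n+1)) * x^(n+1) by ring,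
      step_cA]
    ring
  have huniq := h1.unique h2
  have hderiv : deriv (fC μ) x = -(fS μ x) := by
    apply mul_left_cancel₀ hx
    rw [huniq]; ring
  have := hdiff.hasDerivAt
  rwa [hderiv] at this

lemma hasDerivAt_fS {μ : ℝ} (hμ : -(1/2 : ℝ) < μ) {x : ℝ} (hx : x ≠ 0) :
    HasDerivAt (fS μ) (fC μ x - 2*μ*fS μ x / x) x := by
  have hdiff : DifferentiableAt ℝ (fS μ) x :=
    ((hasFPowerSeries_pB hμ).analyticAt_of_mem (by simp)).differentiableAt
  have h1 := hasSum_deriv_aux (hasFPowerSeries_pB hμ) x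
  -- shifted sum of fS
  have hshift : HasSum (fun n : ℕ => cB μ (n+1) * x^(n+1)) (fS μ x) := by
    have h0 := hasSum_fS hμ x
    rw [← hasSum_nat_add_iff' 1] at h0
    simpa [cB] using h0
  have h2 : HasSum (fun n : ℕ => ((n:ℝ) + 1) * (pB μ (n+1) fun _ => x))
      (fC μ x * x - 2*μ*fS μ x) := by
    have h3 := ((hasSum_fC hμ x).mul_right x).sub (hshift.mul_left (2*μ))
    apply h3.congr_fun
    intro n
    rw [pB, ofScalars_apply_eq, smul_eq_mul]
    rw [show ((n:ℝ)+1) * (cB μ (n+1) * x^(n+1)) = (((n:ℝ)+1) * cB μ (n+1)) * x^(n+1) by ring,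
      step_cB hμ]
    ring
  have heq := h1.unique h2
  have hderiv : deriv (fS μ) x = fC μ x - 2*μ*fS μ x / x := by
    apply mul_left_cancel₀ hx
    rw [heq]; field_simp
  have := hdiff.hasDerivAt
  rwa [hderiv] at this


lemma fC_eq_even {μ : ℝ} (hμ : -(1/2 : ℝ) < μ) (t : ℝ) :
    fC μ t = ∑' k : ℕ, (-1:ℝ)^k * t^(2*k) / gammaMu μ (2*k) := by
  rw [← (hasSum_fC hμ t).tsum_eq]
  rw [← Function.Injective.tsum_eq (f := fun n => cA μ n * t ^ n)
    (g := fun k => 2*k) (fun a b h => by simp only at h; omega) ?_]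
  · apply tsum_congr
    intro k
    have h1 : Even (2*k) := ⟨k, by ring⟩
    have h2 : (2*k)/2 = k := by omega
    simp only [cA, if_pos h1, h2]
    ring
  · intro n hn
    rcases Nat.even_or_odd n with he | ho
    · obtain ⟨m, hm⟩ := he
      exact ⟨m, by simp only; omega⟩
    · exfalso
      apply hn
      unfold cA
      simp only
      rw [if_neg (fun h => (Nat.not_odd_iff_even.mpr h) ho), zero_mul]

lemma fS_eq_odd {μ : ℝ} (hμ : -(1/2 : ℝ) < μ) (t : ℝ) :
    fS μ t = ∑' k : ℕ, (-1:ℝ)^k * t^(2*k+1) / gammaMu μ (2*k+1) := by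
  rw [← (hasSum_fS hμ t).tsum_eq]
  rw [← Function.Injective.tsum_eq (f := fun n => cB μ n * t ^ n)
    (g := fun k => 2*k+1) (fun a b h => by simp only at h; omega) ?_]
  · apply tsum_congr
    intro k
    have h1 : Odd (2*k+1) := ⟨k, by ring⟩
    have h2 : (2*k+1)/2 = k := by omega
    simp only [cB, if_pos h1, h2]
    ring
  · intro n hn
    rcases Nat.even_or_odd n with he | ho
    · exfalso
      apply hn
      unfold cB
      simp only
      rw [if_neg (fun h => (Nat.not_even_iff_odd.mpr h) he), zero_mul]
    · obtain ⟨m, hm⟩ := ho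
      exact ⟨m, by simp only; omega⟩

lemma expMu_neg_I_mul {μ : ℝ} (hμ : -(1/2 : ℝ) < μ) (t : ℝ) :
    expMu μ (-Complex.I * t) = (fC μ t : ℂ) - Complex.I * (fS μ t : ℂ) := by
  unfold expMu
  set f : ℕ → ℂ := fun n => (-Complex.I * t) ^ n / (gammaMu μ n : ℂ) with hf
  have hnorm : ∀ n, ‖f n‖ = |t| ^ n / gammaMu μ n := by
    intro n
    have hg := gammaMu_pos hμ n
    rw [hf]
    simp only [norm_div, norm_pow]
    rw [Complex.norm_real, Real.norm_eq_abs, abs_of_pos hg]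
    congr 1
    rw [norm_mul]
    simp [Complex.norm_real]
  have hsum : Summable f := by
    apply Summable.of_norm
    rw [show (fun n => ‖f n‖) = fun n => |t| ^ n / gammaMu μ n from funext hnorm]
    exact summable_pow_div_gammaMu hμ |t| (abs_nonneg t)
  have hsq : (-Complex.I * (t:ℂ))^2 = -((t:ℂ)^2) := by
    calc (-Complex.I * (t:ℂ))^2 = Complex.I^2 * (t:ℂ)^2 := by ring
    _ = -((t:ℂ)^2) := by rw [Complex.I_sq]; ring
  have heven : ∀ k : ℕ, f (2*k) = (((-1:ℝ)^k * t^(2*k) / gammaMu μ (2*k) : ℝ) : ℂ) := by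
    intro k
    rw [hf]
    simp only
    rw [pow_mul, hsq]
    push_cast
    ring
  have hodd : ∀ k : ℕ, f (2*k+1) = -Complex.I * (((-1:ℝ)^k * t^(2*k+1) / gammaMu μ (2*k+1) : ℝ) : ℂ) := by
    intro k
    rw [hf]
    simp only
    rw [pow_succ, pow_mul, hsq]
    push_cast
    ring
  have he : Summable (fun k => f (2*k)) := hsum.comp_injective (fun a b h => by omega)
  have ho : Summable (fun k => f (2*k+1)) := hsum.comp_injective (fun a b h => by omega)
  rw [← tsum_even_add_odd he ho]
  rw [tsum_congr heven, tsum_congr hodd]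
  rw [tsum_mul_left, ← Complex.ofReal_tsum, ← Complex.ofReal_tsum]
  rw [← fC_eq_even hμ t, ← fS_eq_odd hμ t]
  ring

lemma abs_sq_expMu {μ : ℝ} (hμ : -(1/2 : ℝ) < μ) (t : ℝ) :
    ‖expMu μ (-Complex.I * t)‖ ^ 2 = fC μ t ^ 2 + fS μ t ^ 2 := by
  rw [expMu_neg_I_mul hμ t, Complex.sq_norm, Complex.normSq_apply]
  simp [Complex.sub_re, Complex.sub_im, Complex.mul_re, Complex.mul_im]
  ring


lemma gamma_shift_pos {μ : ℝ} (hμ : -(1/2 : ℝ) < μ) (m : ℕ) : (0:ℝ) < μ + m + 3/2 := by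
  have : (0:ℝ) ≤ m := Nat.cast_nonneg m
  linarith

lemma gammaMu_odd_eq {μ : ℝ} (hμ : -(1/2 : ℝ) < μ) (m : ℕ) :
    gammaMu μ (2*m+1) * Real.Gamma (μ + 1/2) =
      (m.factorial : ℝ) * Real.Gamma (μ + m + 3/2) * 2^(2*m+1) := by
  induction m with
  | zero =>
      have h0 : μ + 1/2 ≠ 0 := by linarith
      have h1 : gammaMu μ 1 = 1 + 2*μ := by
        show gammaMu μ (0 + 1) = _; rw [gammaMu_succ]
        simp [gammaMu]
      have h2 : μ + (0:ℕ) + 3/2 = (μ + 1/2) + 1 := by push_cast; ring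
      rw [h1, h2, Real.Gamma_add_one h0]
      simp only [Nat.factorial_zero, Nat.cast_one, one_mul]
      ring
  | succ m ih =>
      have hpos := gamma_shift_pos hμ m
      have h0 : μ + (m:ℝ) + 3/2 ≠ 0 := ne_of_gt hpos
      have hidx : 2*(m+1)+1 = (2*m+1) + 1 + 1 := by ring
      have hstep : gammaMu μ (2*(m+1)+1)
          = ((2*(m+1) + 1 : ℝ) + 2*μ) * ((2*m + 2 : ℝ) * gammaMu μ (2*m+1)) := by
        have ho := gammaMu_odd_succ μ (m+1)
        have he := gammaMu_even_succ μ m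
        rw [ho, show 2*(m+1) = 2*m + 2 from by ring, he]
        push_cast; ring
      have hG : Real.Gamma (μ + (m+1:ℕ) + 3/2) = (μ + m + 3/2) * Real.Gamma (μ + m + 3/2) := by
        rw [show μ + ((m+1:ℕ):ℝ) + 3/2 = (μ + (m:ℝ) + 3/2) + 1 from by push_cast; ring]
        exact Real.Gamma_add_one h0
      rw [hstep, hG, Nat.factorial_succ,
        show 2*(m+1)+1 = (2*m+1)+2 from by ring, pow_add]
      push_cast
      linear_combination ((2 * ((m:ℝ) + 1) + 1 + 2 * μ) * (2 * (m:ℝ) + 2)) * ih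

lemma besselJ_pos_arg {μ : ℝ} (hμ : -(1/2 : ℝ) < μ) {x : ℝ} (hx : 0 < x) :
    Real.Gamma (μ + 1/2) * 2^((μ:ℝ) - 1/2) * x^((1:ℝ)/2 - μ) * besselJ (μ + 1/2) x
      = fS μ x := by
  unfold besselJ
  rw [← tsum_mul_left]
  rw [fS_eq_odd hμ x]
  apply tsum_congr
  intro m
  have hG : (0:ℝ) < Real.Gamma (μ + 1/2) := Real.Gamma_pos_of_pos (by linarith)
  have hGm : (0:ℝ) < Real.Gamma (μ + m + 3/2) := Real.Gamma_pos_of_pos (gamma_shift_pos hμ m)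
  have hfac : (0:ℝ) < m.factorial := by positivity
  have hγ := gammaMu_odd_eq hμ m
  have hγp := gammaMu_pos hμ (2*m+1)
  have hx2 : (0:ℝ) < x/2 := by linarith
  -- rewrite the rpow
  have hexp : (x/2) ^ ((2 * m : ℝ) + (μ + 1/2)) = (x/2)^(2*m) * (x/2)^((μ:ℝ)+1/2) := by
    rw [Real.rpow_add hx2, show ((2*m : ℝ)) = ((2*m : ℕ) : ℝ) from by push_cast; ring,
      Real.rpow_natCast]
  have hgam_arg : μ + 1/2 + (m:ℝ) + 1 = μ + m + 3/2 := by ring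
  rw [hgam_arg, hexp]
  have hd2 : (x/2)^(2*m) = x^(2*m) / 2^(2*m) := div_pow x 2 (2*m)
  have hX : (0:ℝ) < x^((1:ℝ)/2-μ) := Real.rpow_pos_of_pos hx _
  have hB : (2:ℝ)^((μ:ℝ)+1/2) = 2^((μ:ℝ)-1/2) * 2 := by
    rw [show (μ:ℝ)+1/2 = (μ - 1/2) + 1 from by ring, Real.rpow_add (by norm_num), Real.rpow_one]
  have hY : x^((μ:ℝ)+1/2) = x / x^((1:ℝ)/2-μ) := by
    rw [eq_div_iff (ne_of_gt hX), ← Real.rpow_add hx,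
      show (μ + 1/2 + (1/2 - μ) : ℝ) = 1 from by ring, Real.rpow_one]
  have hd3 : (x/2)^((μ:ℝ)+1/2) = x^((μ:ℝ)+1/2) / 2^((μ:ℝ)+1/2) :=
    Real.div_rpow (le_of_lt hx) (by norm_num : (0:ℝ) ≤ 2) _
  have hγval : gammaMu μ (2*m+1) = (m.factorial : ℝ) * Real.Gamma (μ + m + 3/2) * 2^(2*m+1) / Real.Gamma (μ + 1/2) := by
    rw [eq_div_iff (ne_of_gt hG)]
    exact hγ
  have hA : (0:ℝ) < (2:ℝ)^((μ:ℝ)-1/2) := Real.rpow_pos_of_pos (by norm_num) _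
  rw [hγval, hd2, hd3, hY, hB, pow_succ]
  set G := Real.Gamma (μ + 1/2) with hGdef
  set Gm := Real.Gamma (μ + m + 3/2) with hGmdef
  set A := (2:ℝ)^((μ:ℝ)-1/2) with hAdef
  set X := x^((1:ℝ)/2-μ) with hXdef
  have hF : ((m.factorial:ℝ)) ≠ 0 := ne_of_gt hfac
  field_simp [ne_of_gt hG, ne_of_gt hGm, ne_of_gt hA, ne_of_gt hX]
  ring

/-- The candidate function: φ(t) = C(t)² + S(t)². -/
noncomputable def phiMu (μ : ℝ) (t : ℝ) : ℝ := fC μ t ^ 2 + fS μ t ^ 2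

lemma hasDerivAt_phiMu {μ : ℝ} (hμ : -(1/2 : ℝ) < μ) {x : ℝ} (hx : 0 < x) :
    HasDerivAt (phiMu μ) (-4*μ*(fS μ x)^2/x) x := by
  have h1 := (hasDerivAt_fC hμ hx.ne').pow 2
  have h2 := (hasDerivAt_fS hμ hx.ne').pow 2
  have h := h1.add h2
  unfold phiMu
  refine h.congr_deriv ?_
  push_cast
  field_simp
  ring

lemma continuous_phiMu {μ : ℝ} (hμ : -(1/2 : ℝ) < μ) : Continuous (phiMu μ) := by
  have hcC : Continuous (fC μ) := by
    rw [continuous_iff_continuousAt]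
    exact fun x => ((hasFPowerSeries_pA hμ).analyticAt_of_mem (by simp)).differentiableAt.continuousAt
  have hcS : Continuous (fS μ) := by
    rw [continuous_iff_continuousAt]
    exact fun x => ((hasFPowerSeries_pB hμ).analyticAt_of_mem (by simp)).differentiableAt.continuousAt
  exact (hcC.pow 2).add (hcS.pow 2)

lemma fS_one_ne_zero {μ : ℝ} (hμ : -(1/2 : ℝ) < μ) : cB μ 1 ≠ 0 := by
  have h1 : Odd 1 := ⟨0, by ring⟩
  have hg := gammaMu_pos hμ 1
  simp only [cB, if_pos h1]
  norm_num
  exact ne_of_gt hg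

lemma fS_not_zero_on_interval {μ : ℝ} (hμ : -(1/2 : ℝ) < μ) {a b : ℝ} (hab : a < b) :
    ¬ (∀ c ∈ Set.Ioo a b, fS μ c = 0) := by
  intro hz
  set c := (a + b) / 2 with hc
  have hcmem : c ∈ Set.Ioo a b := ⟨by linarith, by linarith⟩
  have hev : fS μ =ᶠ[nhds c] 0 := by
    filter_upwards [Ioo_mem_nhds hcmem.1 hcmem.2] with y hy
    exact hz y hy
  have hanal : AnalyticOnNhd ℝ (fS μ) Set.univ :=
    fun y _ => (hasFPowerSeries_pB hμ).analyticAt_of_mem (by simp)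
  have hzero := hanal.eqOn_zero_of_preconnected_of_eventuallyEq_zero
    isPreconnected_univ (Set.mem_univ c) hev
  have hfun : fS μ = 0 := funext fun y => hzero (Set.mem_univ y)
  have hps : HasFPowerSeriesAt (0 : ℝ → ℝ) (pB μ) 0 := by
    have := (hasFPowerSeries_pB hμ).hasFPowerSeriesAt
    rwa [hfun] at this
  have hpB := hps.eq_zero
  have : pB μ 1 = 0 := by rw [hpB]; rfl
  rw [pB, FormalMultilinearSeries.ofScalars_eq_zero] at this
  exact fS_one_ne_zero hμ this

lemma fS_eq_zero_of_constant {μ : ℝ} (hμ : -(1/2 : ℝ) < μ) (hμ0 : μ ≠ 0) {a b : ℝ}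
    (ha : 0 < a) (hab : a < b) (hconst : ∀ y ∈ Set.Ioo a b, phiMu μ y = phiMu μ a)
    {c : ℝ} (hc : c ∈ Set.Ioo a b) : fS μ c = 0 := by
  have hcpos : 0 < c := lt_trans ha hc.1
  have hd := hasDerivAt_phiMu hμ hcpos
  have hd0 : HasDerivAt (phiMu μ) 0 c := by
    apply (hasDerivAt_const c (phiMu μ a)).congr_of_eventuallyEq
    filter_upwards [Ioo_mem_nhds hc.1 hc.2] with y hy
    exact hconst y hy
  have huniq := hd.unique hd0
  by_contra hS
  exact (div_ne_zero (mul_ne_zero (mul_ne_zero (by norm_num) hμ0) (pow_ne_zero _ hS))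
    hcpos.ne') huniq


theorem deriv_sq_abs_expMu (μ : ℝ) (hμ : -(1/2 : ℝ) < μ) (hμ0 : μ ≠ 0) :
    (∀ x : ℝ, 0 < x →
      HasDerivAt (fun t : ℝ => ‖expMu μ (-Complex.I * t)‖ ^ 2)
        (-μ * (2 : ℝ) ^ (2 * μ + 1) * Real.Gamma (μ + 1/2) ^ 2 * x ^ (-(2 * μ)) *
          besselJ (μ + 1/2) x ^ 2) x) ∧
    (0 < μ →
      StrictAntiOn (fun t : ℝ => ‖expMu μ (-Complex.I * t)‖ ^ 2) (Set.Ioi 0)) ∧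
    (μ < 0 →
      StrictMonoOn (fun t : ℝ => ‖expMu μ (-Complex.I * t)‖ ^ 2) (Set.Ioi 0)) := by
  have hfun : (fun t : ℝ => ‖expMu μ (-Complex.I * t)‖ ^ 2) = phiMu μ :=
    funext fun t => abs_sq_expMu hμ t
  refine ⟨?_, ?_, ?_⟩
  · intro x hx
    rw [hfun]
    have hd := hasDerivAt_phiMu hμ hx
    have hA2 : (2:ℝ)^((μ:ℝ)-1/2) * 2^((μ:ℝ)-1/2) = (2:ℝ)^(2*μ-1 : ℝ) := by
      rw [← Real.rpow_add (by norm_num)]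
      ring_nf
    have h4 : (2:ℝ)^(2*μ+1 : ℝ) = (2:ℝ)^(2*μ-1 : ℝ) * 4 := by
      rw [show (2*μ+1:ℝ) = (2*μ-1) + 2 from by ring, Real.rpow_add (by norm_num)]
      congr 1
      rw [show ((2:ℝ)) = ((2:ℕ):ℝ) from by norm_num]
      rw [Real.rpow_natCast]
      norm_num
    have hX2 : x^((1:ℝ)/2-μ) * x^((1:ℝ)/2-μ) = x * x^(-(2*μ) : ℝ) := by
      rw [← Real.rpow_add hx, show x * x^(-(2*μ) : ℝ) = x^((1:ℝ) + -(2*μ)) from by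
        rw [Real.rpow_add hx, Real.rpow_one]]
      congr 1
      ring
    have heq : -4*μ*(fS μ x)^2/x
        = -μ * (2 : ℝ) ^ (2 * μ + 1) * Real.Gamma (μ + 1/2) ^ 2 * x ^ (-(2 * μ)) *
          besselJ (μ + 1/2) x ^ 2 := by
      rw [h4, ← besselJ_pos_arg hμ hx]
      calc -4*μ*(Real.Gamma (μ+1/2) * 2^((μ:ℝ)-1/2) * x^((1:ℝ)/2-μ) * besselJ (μ+1/2) x)^2/x
          = -4*μ*(Real.Gamma (μ+1/2)^2 * (2^((μ:ℝ)-1/2) * 2^((μ:ℝ)-1/2)) *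
              (x^((1:ℝ)/2-μ) * x^((1:ℝ)/2-μ)) * besselJ (μ+1/2) x^2)/x := by ring
        _ = -4*μ*(Real.Gamma (μ+1/2)^2 * (2:ℝ)^(2*μ-1 : ℝ) * (x * x^(-(2*μ) : ℝ)) *
              besselJ (μ+1/2) x^2)/x := by rw [hA2, hX2]
        _ = -μ * ((2:ℝ)^(2*μ-1 : ℝ) * 4) * Real.Gamma (μ+1/2)^2 * x^(-(2*μ) : ℝ) *
              besselJ (μ+1/2) x^2 := by
            field_simp
    rw [← heq]
    exact hd
  · intro hμpos
    rw [hfun]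
    have hanti : AntitoneOn (phiMu μ) (Set.Ioi 0) := by
      apply antitoneOn_of_deriv_nonpos (convex_Ioi 0) (continuous_phiMu hμ).continuousOn
      · intro x hx
        rw [interior_Ioi] at hx
        exact (hasDerivAt_phiMu hμ hx).differentiableAt.differentiableWithinAt
      · intro x hx
        rw [interior_Ioi] at hx
        rw [(hasDerivAt_phiMu hμ hx).deriv]
        have h1 : 0 ≤ 4*μ*(fS μ x)^2/x :=
          div_nonneg (mul_nonneg (mul_nonneg (by norm_num) hμpos.le) (sq_nonneg _)) hx.le
        have h2 : -4*μ*(fS μ x)^2/x = -(4*μ*(fS μ x)^2/x) := by ring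
        rw [h2]
        linarith
    intro a ha b hb hab
    have hle : phiMu μ b ≤ phiMu μ a := hanti ha hb hab.le
    rcases lt_or_eq_of_le hle with h | h
    · exact h
    · exfalso
      have hconst : ∀ y ∈ Set.Ioo a b, phiMu μ y = phiMu μ a := by
        intro y hy
        have hy0 : y ∈ Set.Ioi (0:ℝ) := lt_trans ha hy.1
        have h1 : phiMu μ y ≤ phiMu μ a := hanti ha hy0 hy.1.le
        have h2 : phiMu μ b ≤ phiMu μ y := hanti hy0 hb hy.2.le
        linarith
      exact fS_not_zero_on_interval hμ hab
        (fun c hc => fS_eq_zero_of_constant hμ hμ0 ha hab hconst hc)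
  · intro hμneg
    rw [hfun]
    have hmono : MonotoneOn (phiMu μ) (Set.Ioi 0) := by
      apply monotoneOn_of_deriv_nonneg (convex_Ioi 0) (continuous_phiMu hμ).continuousOn
      · intro x hx
        rw [interior_Ioi] at hx
        exact (hasDerivAt_phiMu hμ hx).differentiableAt.differentiableWithinAt
      · intro x hx
        rw [interior_Ioi] at hx
        rw [(hasDerivAt_phiMu hμ hx).deriv]
        have h1 : 0 ≤ (-4*μ)*(fS μ x)^2/x := by
          apply div_nonneg _ hx.le
          apply mul_nonneg (by linarith) (sq_nonneg _)
        calc (0:ℝ) ≤ (-4*μ)*(fS μ x)^2/x := h1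
          _ = -4*μ*(fS μ x)^2/x := by ring
    intro a ha b hb hab
    have hle : phiMu μ a ≤ phiMu μ b := hmono ha hb hab.le
    rcases lt_or_eq_of_le hle with h | h
    · exact h
    · exfalso
      have hconst : ∀ y ∈ Set.Ioo a b, phiMu μ y = phiMu μ a := by
        intro y hy
        have hy0 : y ∈ Set.Ioi (0:ℝ) := lt_trans ha hy.1
        have h1 : phiMu μ a ≤ phiMu μ y := hmono ha hy0 hy.1.le
        have h2 : phiMu μ y ≤ phiMu μ b := hmono hy0 hb hy.2.le
        linarith
      exact fS_not_zero_on_interval hμ hab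
        (fun c hc => fS_eq_zero_of_constant hμ hμ0 ha hab hconst hc)
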